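/- Fix n : ℕ, real angles β, γ, and a finite set T of bit strings (Fin n → Bool). Let C_T be the diagonal complex matrix indexed by bit strings with entry 1 at each z ∈ T and 0 otherwise, let X be the matrix with X z k = 1 if hammingDist z k = 1 and 0 otherwise, and let u be the vector whose every entry equals ((2:ℂ)^n)^(−1/2) (the uniform superposition |+⟩^{⊗n}). Let ψ := Matrix.exp(−(i·β)•X) *ᵥ (Matrix.exp(−(i·γ)•C_T) *ᵥ u). Then for every k : Fin n → Bool, ψ k = ((2:ℂ)^n)^(−1/2) · ( exp(−i·γ) · Σ_{z ∈ T} f(β,z,k) + Σ_{z ∉ T} f(β,z,k) ), where f(β,z,k) := (cos β)^(n − hammingDist z k) · (−i · sin β)^(hammingDist z k) and the second sum runs over all bit strings not in T. -/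

import Mathlib

open Complex Matrix NormedSpace

lemma exp_smul_of_mul_self_eq_one {𝔸 : Type*} [NormedRing 𝔸] [NormedAlgebra ℂ 𝔸]
    [CompleteSpace 𝔸] (A : 𝔸) (hA : A * A = 1) (β : ℝ) :
    NormedSpace.exp ((-(Complex.I * β)) • A)
      = (Real.cos β : ℂ) • (1 : 𝔸) + (-(Complex.I * Real.sin β)) • A := by
  have hsq : A ^ 2 = 1 := by rw [pow_two, hA]
  have hev : ∀ m : ℕ, A ^ (2 * m) = 1 := fun m => by
    rw [pow_mul, hsq, one_pow]
  have hodd : ∀ m : ℕ, A ^ (2 * m + 1) = A := fun m => by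
    rw [pow_succ, hev, one_mul]
  set c : ℂ := -(Complex.I * β) with hc
  have hc_ev : ∀ m : ℕ, c ^ (2 * m) = (-1 : ℂ) ^ m * (β : ℂ) ^ (2 * m) := by
    intro m
    rw [hc, neg_pow, mul_pow, pow_mul, pow_mul, Complex.I_sq]
    norm_num
  have hcos : HasSum (fun m : ℕ => (Nat.factorial (2 * m) : ℂ)⁻¹ • c ^ (2 * m) • (1 : 𝔸))
      ((Real.cos β : ℂ) • (1 : 𝔸)) := by
    have h1 := Complex.hasSum_cos (β : ℂ)
    rw [← Complex.ofReal_cos] at h1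
    convert h1.smul_const (1 : 𝔸) using 2 with m
    rw [smul_smul, hc_ev]
    congr 1
    field_simp
  have hsin : HasSum (fun m : ℕ => (Nat.factorial (2 * m + 1) : ℂ)⁻¹ • c ^ (2 * m + 1) • A)
      ((-(Complex.I * Real.sin β)) • A) := by
    have h1 := (Complex.hasSum_sin (β : ℂ)).mul_left (-Complex.I)
    rw [← Complex.ofReal_sin] at h1
    have h2 : -Complex.I * (Real.sin β : ℂ) = -(Complex.I * Real.sin β) := by ring
    rw [h2] at h1
    convert h1.smul_const A using 2 with m
    rw [smul_smul]
    congr 1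
    rw [pow_succ, hc_ev, hc]
    field_simp
    ring
  rw [exp_eq_tsum ℂ]
  refine HasSum.tsum_eq ?_
  refine HasSum.even_add_odd ?_ ?_
  · convert hcos using 2 with m
    rw [smul_pow, hev, smul_smul]
  · convert hsin using 2 with m
    rw [smul_pow, hodd, smul_smul]

/-- The matrix that flips bit `j`. -/
def flipMat (n : ℕ) (j : Fin n) : Matrix (Fin n → Bool) (Fin n → Bool) ℂ :=
  Matrix.of fun z w => if w = Function.update z j (!z j) then 1 else 0

lemma flip_flip_self {n : ℕ} (j : Fin n) (z : Fin n → Bool) :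
    Function.update (Function.update z j (!z j)) j (!(Function.update z j (!z j) j)) = z := by
  simp [Function.update_idem]

lemma flip_comm {n : ℕ} {j l : Fin n} (h : j ≠ l) (z : Fin n → Bool) :
    Function.update (Function.update z j (!z j)) l (!(Function.update z j (!z j) l)) =
    Function.update (Function.update z l (!z l)) j (!(Function.update z l (!z l) j)) := by
  rw [Function.update_of_ne h.symm, Function.update_of_ne h, Function.update_comm h]

lemma flipMat_mul {n : ℕ} (j : Fin n) (M : Matrix (Fin n → Bool) (Fin n → Bool) ℂ)
    (z w : Fin n → Bool) :
    (flipMat n j * M) z w = M (Function.update z j (!z j)) w := by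
  simp [flipMat, Matrix.mul_apply, ite_mul]

lemma flipMat_mul_self {n : ℕ} (j : Fin n) : flipMat n j * flipMat n j = 1 := by
  ext z w
  rw [flipMat_mul]
  simp only [flipMat, Matrix.of_apply, Matrix.one_apply, flip_flip_self]
  exact if_congr eq_comm rfl rfl

lemma flipMat_commute {n : ℕ} (j l : Fin n) : Commute (flipMat n j) (flipMat n l) := by
  rcases eq_or_ne j l with rfl | h
  · rfl
  · unfold Commute SemiconjBy
    ext z w
    rw [flipMat_mul, flipMat_mul]
    simp only [flipMat, Matrix.of_apply]
    rw [flip_comm h]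

lemma eq_flip_iff {n : ℕ} (j : Fin n) (z w : Fin n → Bool) :
    w = Function.update z j (!z j) ↔ ({i | z i ≠ w i} : Finset (Fin n)) = {j} := by
  constructor
  · rintro rfl
    ext i
    simp only [Finset.mem_filter, Finset.mem_univ, true_and, Finset.mem_singleton,
      Finset.mem_insert]
    rcases eq_or_ne i j with rfl | h
    · simp
    · simp [Function.update_of_ne h, h]
  · intro h
    funext i
    have hi : z i ≠ w i ↔ i = j := by
      rw [← Finset.mem_singleton, ← h]
      simp
    rcases eq_or_ne i j with rfl | hij
    · have : z i ≠ w i := hi.mpr rfl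
      rw [Function.update_self]
      rcases Bool.eq_false_or_eq_true (z i) with h' | h' <;>
        simp_all [Bool.not_eq_iff]
    · rw [Function.update_of_ne hij]
      by_contra hc
      exact hij (hi.mp (Ne.symm hc))

lemma X_eq_sum_flipMat (n : ℕ) :
    (Matrix.of (fun z k => if hammingDist z k = 1 then (1 : ℂ) else 0)) =
      ∑ j : Fin n, flipMat n j := by
  ext z w
  simp only [Matrix.sum_apply, flipMat, Matrix.of_apply]
  simp_rw [eq_flip_iff]
  rw [Finset.sum_boole]
  rcases eq_or_ne (hammingDist z w) 1 with h | h
  · obtain ⟨j0, hj0⟩ := Finset.card_eq_one.mp h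
    rw [if_pos h]
    rw [show (Finset.univ.filter fun j : Fin n => ({i | z i ≠ w i} : Finset (Fin n)) = {j}) = {j0}
      from ?_]
    · simp
    · ext j
      simp only [Finset.mem_filter, Finset.mem_univ, true_and, Finset.mem_singleton, hj0]
      constructor
      · intro hh; exact Finset.singleton_injective hh.symm
      · rintro rfl; rfl
  · rw [if_neg h]
    rw [show (Finset.univ.filter fun j : Fin n => ({i | z i ≠ w i} : Finset (Fin n)) = {j}) = ∅
      from ?_]
    · simp
    · ext j
      simp only [Finset.mem_filter, Finset.mem_univ, true_and, Finset.notMem_empty, iff_false]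
      intro hh
      apply h
      rw [show hammingDist z w = ({i | z i ≠ w i} : Finset (Fin n)).card from rfl, hh]
      simp

lemma g_comm {n : ℕ} (c d : ℂ) (a b : Fin n) :
    Commute (c • (1 : Matrix (Fin n → Bool) (Fin n → Bool) ℂ) + d • flipMat n a)
      (c • 1 + d • flipMat n b) := by
  apply Commute.add_right <;> apply Commute.add_left
  · exact ((Commute.one_left _).smul_left c).smul_right c
  · exact ((Commute.one_right _).smul_right c).smul_left d
  · exact ((Commute.one_left _).smul_left c).smul_right d
  · exact ((flipMat_commute a b).smul_left d).smul_right d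

lemma noncommProd_flip_entry {n : ℕ} (c d : ℂ) (s : Finset (Fin n)) (z w : Fin n → Bool) :
    s.noncommProd (fun j => c • (1 : Matrix (Fin n → Bool) (Fin n → Bool) ℂ) + d • flipMat n j)
      (fun x _ y _ _ => g_comm c d x y) z w =
      if ∀ j ∉ s, z j = w j then
        c ^ (s.card - (s.filter fun j => z j ≠ w j).card) *
          d ^ (s.filter fun j => z j ≠ w j).card
      else 0 := by
  induction s using Finset.induction_on generalizing z with
  | empty =>
    simp only [Finset.noncommProd_empty, Finset.notMem_empty, not_false_iff, forall_true_left,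
      Finset.filter_empty, Finset.card_empty, Finset.card_empty, Nat.sub_zero, pow_zero, mul_one,
      Matrix.one_apply]
    exact if_congr funext_iff rfl rfl
  | @insert a s ha ih =>
    rw [Finset.noncommProd_insert_of_notMem _ _ _ (fun x _ y _ _ => g_comm c d x y) ha]
    set z' := Function.update z a (!z a) with hz'
    have happly : ((c • (1 : Matrix (Fin n → Bool) (Fin n → Bool) ℂ) + d • flipMat n a) *
        s.noncommProd _ (fun x _ y _ _ => g_comm c d x y)) z w
        = c * (s.noncommProd (fun j => c • 1 + d • flipMat n j)
            (fun x _ y _ _ => g_comm c d x y)) z w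
          + d * (s.noncommProd (fun j => c • 1 + d • flipMat n j)
            (fun x _ y _ _ => g_comm c d x y)) z' w := by
      rw [Matrix.add_mul, Matrix.smul_mul, Matrix.smul_mul, Matrix.one_mul, Matrix.add_apply,
        Matrix.smul_apply, Matrix.smul_apply, flipMat_mul]
      rfl
    rw [happly, ih z, ih z']
    have hz'eq : ∀ j ∈ s, z' j = z j := fun j hj =>
      Function.update_of_ne (fun h : j = a => ha (h ▸ hj)) _ _
    have F3 : (s.filter fun j => z' j ≠ w j) = s.filter fun j => z j ≠ w j :=
      Finset.filter_congr fun j hj => by rw [hz'eq j hj]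
    have hD : (s.filter fun j => z j ≠ w j).card ≤ s.card := Finset.card_filter_le _ _
    have F1 : (∀ j ∉ s, z j = w j) ↔ (∀ j ∉ insert a s, z j = w j) ∧ z a = w a := by
      constructor
      · intro h
        exact ⟨fun j hj => h j (fun hs => hj (Finset.mem_insert_of_mem hs)),
          h a ha⟩
      · rintro ⟨h1, h2⟩ j hj
        rcases eq_or_ne j a with rfl | hja
        · exact h2
        · exact h1 j (by simp [hja, hj])
    have F2 : (∀ j ∉ s, z' j = w j) ↔ (∀ j ∉ insert a s, z j = w j) ∧ (!z a) = w a := by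
      constructor
      · intro h
        refine ⟨fun j hj => ?_, by simpa [hz'] using h a ha⟩
        have hja : j ≠ a := fun hh => hj (hh ▸ Finset.mem_insert_self a s)
        have := h j (fun hs => hj (Finset.mem_insert_of_mem hs))
        rwa [hz', Function.update_of_ne hja] at this
      · rintro ⟨h1, h2⟩ j hj
        rcases eq_or_ne j a with rfl | hja
        · simpa [hz'] using h2
        · rw [hz', Function.update_of_ne hja]
          exact h1 j (by simp [hja, hj])
    by_cases hC : ∀ j ∉ insert a s, z j = w j
    · by_cases hza : z a = w a
      · have hnz' : ¬(∀ j ∉ s, z' j = w j) := by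
          rw [F2]
          rintro ⟨-, h2⟩
          rw [← hza] at h2
          exact (Bool.not_ne_self (z a)) h2
        rw [if_pos (F1.mpr ⟨hC, hza⟩), if_neg hnz', if_pos hC, Finset.filter_insert,
          if_neg (by simpa using hza), Finset.card_insert_of_notMem ha]
        rw [show s.card + 1 - (s.filter fun j => z j ≠ w j).card
            = (s.card - (s.filter fun j => z j ≠ w j).card) + 1 by omega]
        rw [pow_succ]
        ring
      · have hnz : ¬(∀ j ∉ s, z j = w j) := by
          rw [F1]; rintro ⟨-, h2⟩; exact hza h2
        have hz'c : (∀ j ∉ s, z' j = w j) := by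
          rw [F2]
          refine ⟨hC, ?_⟩
          rcases Bool.eq_false_or_eq_true (z a) with h | h <;>
            rcases Bool.eq_false_or_eq_true (w a) with h' | h' <;> simp_all
        rw [if_neg hnz, if_pos hz'c, if_pos hC, Finset.filter_insert,
          if_pos (by simpa using hza), Finset.card_insert_of_notMem ha,
          Finset.card_insert_of_notMem (fun hm => ha (Finset.mem_of_mem_filter a hm)), F3]
        rw [show s.card + 1 - ((s.filter fun j => z j ≠ w j).card + 1)
            = s.card - (s.filter fun j => z j ≠ w j).card by omega]
        rw [pow_succ]
        ring
    · rw [if_neg (fun h => hC (F1.mp h).1), if_neg (fun h => hC (F2.mp h).1), if_neg hC]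
      ring

lemma exp_X_entry (n : ℕ) (β : ℝ) (z w : Fin n → Bool) :
    NormedSpace.exp ((-(Complex.I * β)) •
        (Matrix.of (fun z k => if hammingDist z k = 1 then (1 : ℂ) else 0) :
          Matrix (Fin n → Bool) (Fin n → Bool) ℂ)) z w =
      (Real.cos β : ℂ) ^ (n - hammingDist z w) *
        (-(Complex.I * Real.sin β)) ^ (hammingDist z w) := by
  letI : SeminormedRing (Matrix (Fin n → Bool) (Fin n → Bool) ℂ) := Matrix.linftyOpSemiNormedRing
  letI : NormedRing (Matrix (Fin n → Bool) (Fin n → Bool) ℂ) := Matrix.linftyOpNormedRing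
  letI : NormedAlgebra ℂ (Matrix (Fin n → Bool) (Fin n → Bool) ℂ) := Matrix.linftyOpNormedAlgebra
  have hsmul : (-(Complex.I * β)) •
      (Matrix.of (fun z k => if hammingDist z k = 1 then (1 : ℂ) else 0) :
        Matrix (Fin n → Bool) (Fin n → Bool) ℂ) =
      ∑ j : Fin n, (-(Complex.I * (β : ℂ))) • flipMat n j := by
    rw [X_eq_sum_flipMat n, Finset.smul_sum]
  have hpair : (↑(Finset.univ : Finset (Fin n)) : Set (Fin n)).Pairwise
      (Function.onFun Commute fun j => (-(Complex.I * (β : ℂ))) • flipMat n j) :=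
    fun a _ b _ _ => ((flipMat_commute a b).smul_left _).smul_right _
  rw [hsmul, Matrix.exp_sum_of_commute _ _ hpair]
  have hcong : Finset.univ.noncommProd (fun j => NormedSpace.exp ((-(Complex.I * (β : ℂ))) • flipMat n j))
      (fun a ha b hb hab => ((hpair.of_refl ha hb).exp)) =
      Finset.univ.noncommProd
        (fun j => (Real.cos β : ℂ) • (1 : Matrix (Fin n → Bool) (Fin n → Bool) ℂ) +
          (-(Complex.I * Real.sin β)) • flipMat n j)
        (fun x _ y _ _ => g_comm _ _ x y) := by
    apply Finset.noncommProd_congr rfl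
    intro j _
    exact exp_smul_of_mul_self_eq_one (flipMat n j) (flipMat_mul_self j) β
  rw [hcong]
  have := noncommProd_flip_entry (n := n) (Real.cos β : ℂ) (-(Complex.I * Real.sin β))
    Finset.univ z w
  rw [this, if_pos (by simp)]
  rw [Finset.card_univ, Fintype.card_fin]
  rfl

theorem qaoa_state_entry (n : ℕ) (β γ : ℝ) (T : Finset (Fin n → Bool))
    (k : Fin n → Bool) :
    let C_T : Matrix (Fin n → Bool) (Fin n → Bool) ℂ :=
      Matrix.diagonal (fun z => if z ∈ T then 1 else 0)
    let X : Matrix (Fin n → Bool) (Fin n → Bool) ℂ :=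
      Matrix.of (fun z k => if hammingDist z k = 1 then (1 : ℂ) else 0)
    let u : (Fin n → Bool) → ℂ := fun _ => ((2 : ℂ) ^ n) ^ (-(1 / 2 : ℂ))
    let f : ℝ → (Fin n → Bool) → (Fin n → Bool) → ℂ := fun β z k =>
      (Real.cos β : ℂ) ^ (n - hammingDist z k) *
        (-(Complex.I * Real.sin β)) ^ (hammingDist z k)
    let ψ : (Fin n → Bool) → ℂ :=
      NormedSpace.exp ((-(Complex.I * β)) • X) *ᵥ
        (NormedSpace.exp ((-(Complex.I * γ)) • C_T) *ᵥ u)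
    ψ k = ((2 : ℂ) ^ n) ^ (-(1 / 2 : ℂ)) *
      (Complex.exp (-(Complex.I * γ)) * ∑ z ∈ T, f β z k + ∑ z ∈ Tᶜ, f β z k) := by
  intro C_T X u f ψ
  have hdiag : NormedSpace.exp ((-(Complex.I * γ)) • C_T) =
      Matrix.diagonal (fun z => Complex.exp (-(Complex.I * γ) * (if z ∈ T then 1 else 0))) := by
    show NormedSpace.exp ((-(Complex.I * (γ:ℂ))) • Matrix.diagonal _) = _
    rw [← Matrix.diagonal_smul, Matrix.exp_diagonal]
    refine congrArg Matrix.diagonal (funext fun z => ?_)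
    rw [Pi.coe_exp, Pi.smul_apply, smul_eq_mul, ← Complex.exp_eq_exp_ℂ]
  have hψ : ψ k = ∑ z, (f β z k) *
      (Complex.exp (-(Complex.I * γ) * (if z ∈ T then 1 else 0)) *
        ((2 : ℂ) ^ n) ^ (-(1 / 2 : ℂ))) := by
    show (NormedSpace.exp ((-(Complex.I * (β:ℂ))) • X) *ᵥ _) k = _
    rw [hdiag]
    rw [show (Matrix.diagonal (fun z => Complex.exp (-(Complex.I * γ) *
        (if z ∈ T then 1 else 0))) *ᵥ u) = fun z => Complex.exp (-(Complex.I * γ) *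
        (if z ∈ T then 1 else 0)) * ((2 : ℂ) ^ n) ^ (-(1 / 2 : ℂ)) from
      funext fun z => Matrix.mulVec_diagonal _ _ _]
    rw [Matrix.mulVec]
    simp only [dotProduct]
    refine Finset.sum_congr rfl fun z _ => ?_
    congr 1
    rw [exp_X_entry n β k z, hammingDist_comm]
  rw [hψ, ← Finset.sum_add_sum_compl T]
  have h1 : (∑ z ∈ T, (f β z k) * (Complex.exp (-(Complex.I * γ) * (if z ∈ T then 1 else 0)) *
      ((2 : ℂ) ^ n) ^ (-(1 / 2 : ℂ)))) =
      (∑ z ∈ T, f β z k) * (Complex.exp (-(Complex.I * γ)) * ((2 : ℂ) ^ n) ^ (-(1 / 2 : ℂ))) := by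
    rw [Finset.sum_mul]
    exact Finset.sum_congr rfl fun z hz => by rw [if_pos hz, mul_one]
  have h2 : (∑ z ∈ Tᶜ, (f β z k) * (Complex.exp (-(Complex.I * γ) * (if z ∈ T then 1 else 0)) *
      ((2 : ℂ) ^ n) ^ (-(1 / 2 : ℂ)))) =
      (∑ z ∈ Tᶜ, f β z k) * ((2 : ℂ) ^ n) ^ (-(1 / 2 : ℂ)) := by
    rw [Finset.sum_mul]
    exact Finset.sum_congr rfl fun z hz => by
      rw [if_neg (Finset.mem_compl.mp hz), mul_zero, Complex.exp_zero, one_mul]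
  rw [h1, h2]
  ring
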